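/- Let x₀, y₀ ∈ F and suppose ξ := x₀^q·y₀ − x₀·y₀^q satisfies ξ^q = ξ and ξ ≠ 0. Then x₀·y₀^{q²} − x₀^{q²}·y₀ = 0 if and only if both x₀^{q²−1} = −1 and y₀^{q²−1} = −1. -/

import Mathlib

/-- `x₀y₀^{q²} − x₀^{q²}y₀ = 0` iff `x₀^{q²−1} = −1` and `y₀^{q²−1} = −1`. -/
theorem stmt5 (p : ℕ) (hp : p.Prime) (hodd : Odd p) (q : ℕ)
    (hq : ∃ n : ℕ, 0 < n ∧ q = p ^ n)
    (F : Type*) [Field F] [IsAlgClosed F] [CharP F p]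
    (x₀ y₀ : F) (ξ : F) (hξdef : ξ = x₀ ^ q * y₀ - x₀ * y₀ ^ q)
    (hξ : ξ ^ q = ξ) (hξ0 : ξ ≠ 0) :
    x₀ * y₀ ^ (q ^ 2) - x₀ ^ (q ^ 2) * y₀ = 0 ↔
      x₀ ^ (q ^ 2 - 1) = -1 ∧ y₀ ^ (q ^ 2 - 1) = -1 := by
  obtain ⟨n, hn, rfl⟩ := hq
  haveI : Fact p.Prime := ⟨hp⟩
  set q := p ^ n with hqdef
  have hq0 : q ≠ 0 := (Nat.pow_pos hp.pos).ne'
  have hq1 : 1 ≤ q ^ 2 := Nat.one_le_pow _ _ (Nat.pos_of_ne_zero (by positivity))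
  have hx0 : x₀ ≠ 0 := by
    rintro rfl
    apply hξ0
    simp [hξdef, zero_pow hq0]
  have hy0 : y₀ ≠ 0 := by
    rintro rfl
    apply hξ0
    simp [hξdef, zero_pow hq0]
  have hxa : x₀ ^ (q ^ 2) = x₀ ^ (q ^ 2 - 1) * x₀ := by
    rw [← pow_succ, Nat.sub_add_cancel hq1]
  have hya : y₀ ^ (q ^ 2) = y₀ ^ (q ^ 2 - 1) * y₀ := by
    rw [← pow_succ, Nat.sub_add_cancel hq1]
  have hqq : ∀ z : F, (z ^ q) ^ q = z ^ (q ^ 2) := fun z => by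
    rw [← pow_mul, sq]
  have key : x₀ ^ (q ^ 2) * y₀ ^ q - x₀ ^ q * y₀ ^ (q ^ 2) = ξ := by
    calc x₀ ^ (q ^ 2) * y₀ ^ q - x₀ ^ q * y₀ ^ (q ^ 2)
        = (x₀ ^ q * y₀) ^ q - (x₀ * y₀ ^ q) ^ q := by
          rw [mul_pow, mul_pow, hqq, hqq]
      _ = (x₀ ^ q * y₀ - x₀ * y₀ ^ q) ^ q := (sub_pow_char_pow _ _ ..).symm
      _ = ξ := by rw [← hξdef, hξ]
  constructor
  · intro h
    set a := x₀ ^ (q ^ 2 - 1) with ha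
    set b := y₀ ^ (q ^ 2 - 1) with hb
    rw [hxa, hya] at h key
    have hab : b = a := by
      have h' : (b - a) * (x₀ * y₀) = 0 := by linear_combination h
      rcases mul_eq_zero.1 h' with h'' | h''
      · exact sub_eq_zero.1 h''
      · exact absurd h'' (mul_ne_zero hx0 hy0)
    rw [hab] at key
    rw [hξdef] at key hξ0
    have ha1 : (a + 1) * (x₀ ^ q * y₀ - x₀ * y₀ ^ q) = 0 := by
      linear_combination -key
    have haval : a = -1 := by
      rcases mul_eq_zero.1 ha1 with h'' | h''
      · exact eq_neg_of_add_eq_zero_left h''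
      · exact absurd h'' hξ0
    exact ⟨haval, hab.trans haval⟩
  · rintro ⟨hx, hy⟩
    rw [hxa, hya, hx, hy]
    ring
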